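/- Let H ⊆ binom([n],k) be a homogeneous hypergraph (i.e. s-homogeneous for some s ≥ 2) with intersection pattern J ⊆ 2^[k] ∖ {[k]}. Then |H| ≤ |∂_{k−r(J)} H|. -/

import Mathlib

open Finset

/-- A Δ-system (sunflower) with center `C`: a family of at least two sets such that
the intersection of any two distinct members equals `C`. -/
def IsDeltaSystem (D : Finset (Finset ℕ)) (C : Finset ℕ) : Prop :=
  2 ≤ D.card ∧ ∀ A ∈ D, ∀ B ∈ D, A ≠ B → A ∩ B = C

/-- `A : Fin p → Finset ℕ` is an `a⃗`-partition of the set `E`. -/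
def IsAPartition (p : ℕ) (a : Fin p → ℕ) (A : Fin p → Finset ℕ) (E : Finset ℕ) : Prop :=
  (∀ i, (A i).card = a i) ∧ (∀ i j, i ≠ j → Disjoint (A i) (A j)) ∧
    Finset.univ.sup A = E

/-- A semi-`(a⃗,b⃗)`-Δ-system with host `E0` and petals `E i j` (`i ∈ [p]`, `j ∈ [b i]`):
for some `a⃗`-partition `E0 = A 1 ∪ ⋯ ∪ A p`, for each `i` the family
`{E0, E i 1, …, E i (b i)}` is a Δ-system with center `E0 \ A i`. -/
def IsSemiSystem (p : ℕ) (a b : Fin p → ℕ) (E0 : Finset ℕ)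
    (E : (i : Fin p) → Fin (b i) → Finset ℕ) : Prop :=
  ∃ A : Fin p → Finset ℕ, IsAPartition p a A E0 ∧
    ∀ i : Fin p,
      (∀ j, E i j ≠ E0) ∧ Function.Injective (E i) ∧
      (∀ j, E0 ∩ E i j = E0 \ A i) ∧
      (∀ j j', j ≠ j' → E i j ∩ E i j' = E0 \ A i)

/-- An `(a⃗,b⃗)`-Δ-system: a semi-`(a⃗,b⃗)`-Δ-system in which the sets `E i j \ E0`
are pairwise disjoint. -/
def IsABSystem (p : ℕ) (a b : Fin p → ℕ) (E0 : Finset ℕ)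
    (E : (i : Fin p) → Fin (b i) → Finset ℕ) : Prop :=
  IsSemiSystem p a b E0 E ∧
    ∀ x y : (i : Fin p) × Fin (b i), x ≠ y →
      Disjoint (E x.1 x.2 \ E0) (E y.1 y.2 \ E0)

/-- The family described by the predicate `Fam` contains an `(a⃗,d)`-Δ-system, i.e. an
`(a⃗,b⃗)`-Δ-system with `b` a sequence of positive integers summing to `d`, all of whose
members belong to `Fam`. -/
def FamContainsADSystem (p : ℕ) (a : Fin p → ℕ) (d : ℕ) (Fam : Finset ℕ → Prop) : Prop :=
  ∃ b : Fin p → ℕ, (∀ i, 0 < b i) ∧ (∑ i, b i) = d ∧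
    ∃ E0, Fam E0 ∧ ∃ E : (i : Fin p) → Fin (b i) → Finset ℕ,
      (∀ i j, Fam (E i j)) ∧ IsABSystem p a b E0 E

/-- The finite family `H` contains an `(a⃗,d)`-Δ-system as a subfamily. -/
def ContainsADSystem (p : ℕ) (a : Fin p → ℕ) (d : ℕ) (H : Finset (Finset ℕ)) : Prop :=
  FamContainsADSystem p a d (· ∈ H)

/-- A family is `d`-wise-intersecting if every `d` of its members have a common element. -/
def WiseIntersecting (d : ℕ) (F : Finset (Finset ℕ)) : Prop :=
  ∀ f : Fin d → Finset ℕ, (∀ i, f i ∈ F) → ∃ v, ∀ i, v ∈ f i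

/-- Non-trivial `d`-wise-intersecting: `d`-wise-intersecting, but no element lies in
all members. -/
def NonTrivialWiseIntersecting (d : ℕ) (F : Finset (Finset ℕ)) : Prop :=
  WiseIntersecting d F ∧ ¬ ∃ v, ∀ A ∈ F, v ∈ A

/-- A family is intersecting if every two members have a nonempty intersection. -/
def IntersectingFam (F : Finset (Finset ℕ)) : Prop :=
  ∀ A ∈ F, ∀ B ∈ F, (A ∩ B).Nonempty

/-- Non-trivial intersecting: intersecting, but no element lies in all members. -/
def NonTrivialIntersectingFam (F : Finset (Finset ℕ)) : Prop :=
  IntersectingFam F ∧ ¬ ∃ v, ∀ A ∈ F, v ∈ A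

/-- The intersection structure `I(E,H) = {E ∩ E' : E' ∈ H \ {E}}`. -/
def interStruct (H : Finset (Finset ℕ)) (E : Finset ℕ) : Finset (Finset ℕ) :=
  (H.erase E).image (fun E' => E ∩ E')

/-- The projection `Π(S) = {i : S ∩ V i ≠ ∅}` with respect to the parts `V`. -/
def proj {k : ℕ} (V : Fin k → Finset ℕ) (S : Finset ℕ) : Finset (Fin k) :=
  Finset.univ.filter (fun i => (S ∩ V i).Nonempty)

/-- `H ⊆ binom([n],k)` is `s`-homogeneous with intersection pattern
`J ⊆ 2^[k] ∖ {[k]}`: `H` is `k`-partite (with parts partitioning `[n] = Icc 1 n`),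
`Π(I(E,H)) = J` for all `E ∈ H`, `J` is closed under intersection, and every set of
`I(E,H)` is the center of a Δ-system of size `s` formed by edges of `H` containing `E`. -/
def IsHomogeneousWith (n k s : ℕ) (H : Finset (Finset ℕ)) (J : Finset (Finset (Fin k))) :
    Prop :=
  ∃ V : Fin k → Finset ℕ,
    (∀ i j, i ≠ j → Disjoint (V i) (V j)) ∧
    Finset.univ.sup V = Finset.Icc 1 n ∧
    (∀ E ∈ H, ∀ i, (E ∩ V i).card = 1) ∧
    (Finset.univ : Finset (Fin k)) ∉ J ∧
    (∀ E ∈ H, (interStruct H E).image (proj V) = J) ∧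
    (∀ A ∈ J, ∀ B ∈ J, A ∩ B ∈ J) ∧
    (∀ E ∈ H, ∀ C ∈ interStruct H E,
      ∃ D : Finset (Finset ℕ), D ⊆ H ∧ E ∈ D ∧ D.card = s ∧ IsDeltaSystem D C)

/-- The rank `r(J) = min{|A| : A ⊆ [k], A ∉ J, no B ∈ J contains A}`. -/
noncomputable def patternRank {k : ℕ} (J : Finset (Finset (Fin k))) : ℕ :=
  sInf {m : ℕ | ∃ A : Finset (Fin k), A ∉ J ∧ (∀ B ∈ J, ¬ A ⊆ B) ∧ A.card = m}

/-- The `i`-th shadow of a `k`-uniform family: all `(k-i)`-subsets of its edges. -/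
def iShadow (k i : ℕ) (H : Finset (Finset ℕ)) : Finset (Finset ℕ) :=
  H.biUnion (fun E => Finset.powersetCard (k - i) E)

/-- `deg_H(E')`: the number of edges of `H` containing `E'`. -/
def degSet (H : Finset (Finset ℕ)) (E' : Finset ℕ) : ℕ :=
  (H.filter (fun F => E' ⊆ F)).card

/-- The weight `ω_H(E) = Σ_{E' ⊆ E, |E'| = k-1} 1 / deg_H(E')`. -/
noncomputable def weight (k : ℕ) (H : Finset (Finset ℕ)) (E : Finset ℕ) : ℝ :=
  ∑ E' ∈ Finset.powersetCard (k - 1) E, (1 : ℝ) / (degSet H E' : ℝ)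

/-- `deg_H(uv)` for a 3-graph: the number of edges containing both `u` and `v`. -/
def deg2 (H : Finset (Finset ℕ)) (u v : ℕ) : ℕ :=
  (H.filter (fun A => u ∈ A ∧ v ∈ A)).card

/-- If `H ⊆ binom([n],k)` is homogeneous (i.e. `s`-homogeneous for some
`s ≥ 2`) with intersection pattern `J`, then `|H| ≤ |∂_{k - r(J)} H|`. -/
theorem stmt13 (n k : ℕ) (H : Finset (Finset ℕ)) (J : Finset (Finset (Fin k)))
    (hH : H ⊆ Finset.powersetCard k (Finset.Icc 1 n))
    (hhom : ∃ s : ℕ, 2 ≤ s ∧ IsHomogeneousWith n k s H J) :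
    H.card ≤ (iShadow k (k - patternRank J) H).card := by
  obtain ⟨s, hs, V, hVdisj, hVcover, hpart, hunivJ, hproj, hJint, hdelta⟩ := hhom
  set P : Set ℕ := {m : ℕ | ∃ A : Finset (Fin k), A ∉ J ∧ (∀ B ∈ J, ¬ A ⊆ B) ∧ A.card = m}
    with hP
  have hk : k ∈ P := by
    refine ⟨Finset.univ, hunivJ, ?_, by simp⟩
    intro B hB hsub
    exact hunivJ (by rwa [Finset.univ_subset_iff.mp hsub] at hB)
  have hPne : P.Nonempty := ⟨k, hk⟩
  have hrank : patternRank J = sInf P := rfl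
  obtain ⟨A, hAJ, hA2, hAcard⟩ := Nat.sInf_mem hPne
  have hrle : patternRank J ≤ k := by rw [hrank]; exact Nat.sInf_le hk
  have hAcard' : A.card = patternRank J := by rw [hrank]; exact hAcard
  set S : Finset ℕ → Finset ℕ := fun E => A.biUnion (fun i => E ∩ V i) with hS
  have hScard : ∀ E ∈ H, (S E).card = patternRank J := by
    intro E hE
    rw [hS]
    rw [Finset.card_biUnion]
    · rw [← hAcard']
      simp only [hpart E hE]
      simp
    · intro i _ j _ hij
      exact (hVdisj i j hij).mono Finset.inter_subset_right Finset.inter_subset_right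
  have hSsub : ∀ E, S E ⊆ E := by
    intro E x hx
    simp only [hS, Finset.mem_biUnion, Finset.mem_inter] at hx
    obtain ⟨i, _, hx, _⟩ := hx
    exact hx
  apply Finset.card_le_card_of_injOn S
  · intro E hE
    simp only [iShadow, Finset.mem_coe, Finset.mem_biUnion]
    refine ⟨E, hE, ?_⟩
    rw [Finset.mem_powersetCard]
    refine ⟨hSsub E, ?_⟩
    rw [hScard E hE, Nat.sub_sub_self hrle]
  · intro E hE E' hE' hSe
    by_contra hne
    have hmem : E ∩ E' ∈ interStruct H E := by
      simp only [interStruct, Finset.mem_image]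
      exact ⟨E', Finset.mem_erase.mpr ⟨fun h => hne h.symm, hE'⟩, rfl⟩
    have hJmem : proj V (E ∩ E') ∈ J := by
      rw [← hproj E hE]
      exact Finset.mem_image_of_mem _ hmem
    apply hA2 _ hJmem
    intro i hi
    have hc := hpart E hE i
    obtain ⟨x, hx⟩ := Finset.card_pos.mp (by omega : 0 < (E ∩ V i).card)
    have hxS : x ∈ S E := Finset.mem_biUnion.mpr ⟨i, hi, hx⟩
    have hxE' : x ∈ E' := hSsub E' (hSe ▸ hxS)
    simp only [proj, Finset.mem_filter, Finset.mem_univ, true_and]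
    exact ⟨x, by simp only [Finset.mem_inter] at hx ⊢; exact ⟨⟨hx.1, hxE'⟩, hx.2⟩⟩
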